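/- Let K be a positive integer and let N(t; a, I) = (2π)^{−K/2} exp( −(1/2) ‖t − a‖² ) denote the K-dimensional Gaussian density with mean a and identity covariance, where ‖·‖ is the Euclidean norm on ℝ^K. Then for all t, n, a ∈ ℝ^K: log( N(t+n; a, I) / N(t; a, I) ) = (1/2) ( ‖t − a‖² − ‖t + n − a‖² ); hence N(t+n; a, I) ≥ N(t; a, I) if and only if ‖n − (a − t)‖² − ‖a − t‖² ≤ 0, i.e. the noise n lies in the closed ball of radius ‖a − t‖ centered at a − t. (Forbidden Sphere Noise-Benefit Condition for backpropagation with Gaussian output neurons.) -/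

import Mathlib

/-- **Forbidden Sphere Noise-Benefit Condition** (backpropagation with Gaussian
output neurons).  For the `K`-dimensional standard Gaussian density
`Nd t a = (2π)^{−K/2} exp(−‖t−a‖²/2)`:
`log(Nd (t+n) a / Nd t a) = (‖t−a‖² − ‖t+n−a‖²)/2`, and `Nd (t+n) a ≥ Nd t a`
exactly when the noise `n` lies in the closed ball of radius `‖a−t‖` about `a−t`. -/
theorem forbidden_sphere_bp
    (K : ℕ)
    (Nd : EuclideanSpace ℝ (Fin K) → EuclideanSpace ℝ (Fin K) → ℝ)
    (hNd : ∀ t a, Nd t a =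
      (2 * Real.pi) ^ (-(K : ℝ) / 2) * Real.exp (-(1 / 2) * ‖t - a‖ ^ 2)) :
    ∀ t n a : EuclideanSpace ℝ (Fin K),
      (Real.log (Nd (t + n) a / Nd t a) =
        (1 / 2) * (‖t - a‖ ^ 2 - ‖t + n - a‖ ^ 2)) ∧
      (Nd (t + n) a ≥ Nd t a ↔ ‖n - (a - t)‖ ^ 2 - ‖a - t‖ ^ 2 ≤ 0) := by
  intro t n a
  have hc : (0:ℝ) < (2 * Real.pi) ^ (-(K : ℝ) / 2) :=
    Real.rpow_pos_of_pos (by positivity) _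
  have hveq : t + n - a = n - (a - t) := by abel
  have hnorm : ‖t + n - a‖ = ‖n - (a - t)‖ := by rw [hveq]
  have hnorm2 : ‖t - a‖ = ‖a - t‖ := norm_sub_rev _ _
  constructor
  · rw [hNd, hNd, mul_div_mul_left _ _ (ne_of_gt hc),
      ← Real.exp_sub, Real.log_exp]
    ring
  · rw [hNd, hNd]
    rw [ge_iff_le, mul_le_mul_iff_right₀ hc, Real.exp_le_exp]
    constructor
    · intro h
      rw [← hnorm, ← hnorm2]
      nlinarith
    · intro h
      rw [← hnorm, ← hnorm2] at h
      nlinarith
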